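/- Let T be the bilateral forward weighted shift on ℓ²(ℤ, ℂ) defined by (Tx)(n) = w_{n-1} x(n-1) for all n ∈ ℤ, where w_n = R₁ for n ≥ 0 and w_n = R₂ for n < 0, with real numbers 1 < R₁ < R₂. Then T is not topologically mixing. -/

import Mathlib

open Filter Topology Set Pointwise

variable {X : Type*} [NormedAddCommGroup X] [NormedSpace ℂ X]

/-- `T` is compound: for all nonempty open `U, V` there are `N` and scalars `α n`
with `0 < ‖α n‖ ≤ 1` such that `T^n (α n • U) ∩ V ≠ ∅` for all `n ≥ N`. -/
def Compound (T : X →L[ℂ] X) : Prop :=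
  ∀ U V : Set X, IsOpen U → U.Nonempty → IsOpen V → V.Nonempty →
    ∃ N : ℕ, ∃ α : ℕ → ℂ, ∀ n ≥ N,
      (0 < ‖α n‖ ∧ ‖α n‖ ≤ 1) ∧ (((T ^ n) '' (α n • U)) ∩ V).Nonempty

/-- `T` is topologically mixing. -/
def TopologicallyMixing (T : X →L[ℂ] X) : Prop :=
  ∀ U V : Set X, IsOpen U → U.Nonempty → IsOpen V → V.Nonempty →
    ∃ N : ℕ, ∀ n ≥ N, (((T ^ n) '' U) ∩ V).Nonempty

/-- `T` is disk transitive. -/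
def DiskTransitive (T : X →L[ℂ] X) : Prop :=
  ∀ U V : Set X, IsOpen U → U.Nonempty → IsOpen V → V.Nonempty →
    ∃ n : ℕ, ∃ α : ℂ, 0 < ‖α‖ ∧ ‖α‖ ≤ 1 ∧ (((T ^ n) '' (α • U)) ∩ V).Nonempty

/-- The direct sum `T 0 ⊕ ⋯ ⊕ T (k-1)` is `k`-bitransitive: for all nonempty open
`U i, V i` there are `n` and scalars `α i` with `0 < ‖α i‖ ≤ 1` such that
`(T 0 ⊕ ⋯)^n (α 0 • U 0 ⊕ ⋯) ∩ (V 0 ⊕ ⋯) ≠ ∅`, stated componentwise (an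
intersection of product sets is nonempty iff each componentwise intersection is). -/
def kBitransitive {k : ℕ} (T : Fin k → X →L[ℂ] X) : Prop :=
  ∀ U V : Fin k → Set X,
    (∀ i, IsOpen (U i) ∧ (U i).Nonempty) →
    (∀ i, IsOpen (V i) ∧ (V i).Nonempty) →
    ∃ n : ℕ, ∃ α : Fin k → ℂ,
      (∀ i, 0 < ‖α i‖ ∧ ‖α i‖ ≤ 1) ∧
      ∀ i, (((T i ^ n) '' (α i • U i)) ∩ V i).Nonempty

/-- The cross set `C_T(A,B)`. -/
def crossSet (T : X →L[ℂ] X) (A B : Set X) : Set ℕ :=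
  {n | ∃ α : ℂ, 0 < ‖α‖ ∧ ‖α‖ ≤ 1 ∧ (((T ^ n) '' (α • A)) ∩ B).Nonempty}

/-- The junction set `J_T(A,B)`. -/
def junctionSet (T : X →L[ℂ] X) (A B : Set X) : Set (ℕ × ℂ) :=
  {p | 0 < ‖p.2‖ ∧ ‖p.2‖ ≤ 1 ∧ (((T ^ p.1) '' (p.2 • A)) ∩ B).Nonempty}

/-- A subset of `ℕ × ℂ` is bifinite if it contains `{(n, a n) : n ∈ K}` for some
cofinite `K ⊆ ℕ` and some sequence `a : ℕ → ℂ`. -/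
def Bifinite (A : Set (ℕ × ℂ)) : Prop :=
  ∃ K : Set ℕ, Kᶜ.Finite ∧ ∃ a : ℕ → ℂ, ∀ n ∈ K, (n, a n) ∈ A

/-- the bilateral forward weighted shift on `ℓ²(ℤ, ℂ)` with weights
`wₙ = R₁` for `n ≥ 0` and `wₙ = R₂` for `n < 0`, where `1 < R₁ < R₂`, is not
topologically mixing. -/
theorem weightedShift_not_topologicallyMixing (R₁ R₂ : ℝ) (hR₁ : 1 < R₁) (hR₁₂ : R₁ < R₂)
    (w : ℤ → ℂ) (hw : ∀ n : ℤ, w n = if 0 ≤ n then (R₁ : ℂ) else (R₂ : ℂ))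
    (T : lp (fun _ : ℤ => ℂ) 2 →L[ℂ] lp (fun _ : ℤ => ℂ) 2)
    (hT : ∀ (x : lp (fun _ : ℤ => ℂ) 2) (n : ℤ), T x n = w (n - 1) * x (n - 1)) :
    ¬ TopologicallyMixing T := by
  have hp : 0 < (2 : ENNReal).toReal := by norm_num
  have hw1 : ∀ m : ℤ, 1 ≤ ‖w m‖ := by
    intro m
    rw [hw m]
    split_ifs
    · rw [Complex.norm_real, Real.norm_eq_abs, abs_of_pos (by linarith)]; linarith
    · rw [Complex.norm_real, Real.norm_eq_abs, abs_of_pos (by linarith)]; linarith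
  have hcoord : ∀ (x : lp (fun _ : ℤ => ℂ) 2) (k : ℤ), ‖x (k - 1)‖ ≤ ‖T x k‖ := by
    intro x k
    rw [hT x k, norm_mul]
    nlinarith [hw1 (k - 1), norm_nonneg (x (k - 1))]
  have key : ∀ x : lp (fun _ : ℤ => ℂ) 2, ‖x‖ ≤ ‖T x‖ := by
    intro x
    have h1 : ‖x‖ ^ (2:ENNReal).toReal ≤ ‖T x‖ ^ (2:ENNReal).toReal := by
      rw [lp.norm_rpow_eq_tsum hp, lp.norm_rpow_eq_tsum hp]
      have he : (∑' k : ℤ, ‖x k‖ ^ (2:ENNReal).toReal)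
          = ∑' k : ℤ, ‖x (k - 1)‖ ^ (2:ENNReal).toReal :=
        ((Equiv.subRight (1:ℤ)).tsum_eq fun k => ‖x k‖ ^ (2:ENNReal).toReal).symm
      rw [he]
      have hsum : Summable fun k : ℤ => ‖T x k‖ ^ (2:ENNReal).toReal :=
        (lp.memℓp (T x)).summable hp
      refine Summable.tsum_le_tsum (fun k => ?_) ?_ hsum
      · exact Real.rpow_le_rpow (norm_nonneg _) (hcoord x k) hp.le
      · exact hsum.of_nonneg_of_le (fun k => by positivity)
          (fun k => Real.rpow_le_rpow (norm_nonneg _) (hcoord x k) hp.le)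
    exact (Real.rpow_le_rpow_iff (lp.norm_nonneg' x) (lp.norm_nonneg' (T x)) hp).mp h1
  have keyn : ∀ (n : ℕ) (x : lp (fun _ : ℤ => ℂ) 2), ‖x‖ ≤ ‖(T ^ n) x‖ := by
    intro n
    induction n with
    | zero => intro x; simp
    | succ n ih =>
      intro x
      calc ‖x‖ ≤ ‖T x‖ := key x
        _ ≤ ‖(T ^ n) (T x)‖ := ih _
        _ = ‖(T ^ (n+1)) x‖ := by rw [pow_succ, ContinuousLinearMap.mul_apply]
  have hU : ({x : lp (fun _ : ℤ => ℂ) 2 | 1 < ‖x‖}).Nonempty := by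
    refine ⟨lp.single (E := fun _ : ℤ => ℂ) 2 (0:ℤ) (2:ℂ), ?_⟩
    have h := lp.norm_single (E := fun _ : ℤ => ℂ) (by norm_num : (0:ENNReal) < 2) (0:ℤ) (2:ℂ)
    simp only [Set.mem_setOf_eq]
    rw [h]
    norm_num
  intro hmix
  obtain ⟨N, hN⟩ := hmix {x | 1 < ‖x‖} (Metric.ball 0 1)
    (isOpen_lt continuous_const continuous_norm) hU
    Metric.isOpen_ball ⟨0, by simp⟩
  obtain ⟨y, ⟨x, hxU, hxy⟩, hyV⟩ := hN N le_rfl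
  rw [Metric.mem_ball, dist_zero_right] at hyV
  have : ‖x‖ ≤ ‖y‖ := hxy ▸ keyn N x
  have hx1 : (1:ℝ) < ‖x‖ := hxU
  linarith
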